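/- arXiv:1505.06422 — 4 statements merged into one kernel-verified Lean document; each statement's English description precedes it below -/
import Mathlib

section
/- Let B_{ij} ∈ M(d,ℂ) for i,j = 1,…,n be matrices such that every B_{ij} is normal and any two of them commute, and let T = ∑_{i,j=1}^n E_{ij} ⊗ B_{ij} ∈ M(nd,ℂ) be the corresponding block matrix. Then T is separable if and only if T is positive semidefinite. -/
open Matrix Kronecker
open scoped ComplexOrder

/-- A matrix in `M(nd,ℂ)` is separable if it is a finite sum of Kronecker
products of positive semidefinite matrices. -/
def MatSeparable {n d : ℕ} (T : Matrix (Fin n × Fin d) (Fin n × Fin d) ℂ) : Prop :=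
  ∃ (s : ℕ) (P : Fin s → Matrix (Fin n) (Fin n) ℂ)
    (Q : Fin s → Matrix (Fin d) (Fin d) ℂ),
      (∀ i, (P i).PosSemidef) ∧ (∀ i, (Q i).PosSemidef) ∧
        T = ∑ i : Fin s, (P i) ⊗ₖ (Q i)

section Aux

open Module.End

set_option maxHeartbeats 1000000

/-- Positive semidefiniteness of an outer product. -/
private lemma outer_posSemidef {d : ℕ} (v : Fin d → ℂ) :
    (Matrix.vecMulVec v (star v)).PosSemidef := by
  refine Matrix.PosSemidef.of_dotProduct_mulVec_nonneg ?_ ?_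
  · ext a b
    simp [vecMulVec_apply, conjTranspose_apply, mul_comm]
  · intro x
    have : star x ⬝ᵥ (vecMulVec v (star v) *ᵥ x) = star (star v ⬝ᵥ x) * (star v ⬝ᵥ x) := by
      simp only [dotProduct, mulVec, vecMulVec_apply, Pi.star_apply, star_sum, star_mul',
        Finset.mul_sum, Finset.sum_mul]
      rw [Finset.sum_comm]
      apply Finset.sum_congr rfl; intro a _
      apply Finset.sum_congr rfl; intro b _
      ring_nf
      simp [mul_comm, mul_left_comm, mul_assoc]
    rw [this]
    exact star_mul_self_nonneg _

/-- The Kronecker product of positive semidefinite matrices is positive semidefinite. -/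
private lemma kron_posSemidef {n d : ℕ} {P : Matrix (Fin n) (Fin n) ℂ}
    {Q : Matrix (Fin d) (Fin d) ℂ}
    (hP : P.PosSemidef) (hQ : Q.PosSemidef) : (P ⊗ₖ Q).PosSemidef := by
  exact hP.kronecker hQ

/-- Entries of the block matrix built from the blocks `B i j`. -/
private lemma blockEntry {n d : ℕ} (B : Fin n → Fin n → Matrix (Fin d) (Fin d) ℂ)
    (p q : Fin n) (a b : Fin d) :
    (∑ i : Fin n, ∑ j : Fin n, (Matrix.single i j (1 : ℂ)) ⊗ₖ (B i j)) (p,a) (q,b)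
      = B p q a b := by
  simp [Matrix.sum_apply, kroneckerMap_apply, Matrix.single, ite_mul, ite_and,
    Finset.sum_ite_eq, Finset.sum_ite_eq']

/-- A finite commuting family of symmetric operators admits an orthonormal basis
of simultaneous eigenvectors. -/
private lemma exists_onb_of_commute {ι E : Type} [Fintype ι] [NormedAddCommGroup E]
    [InnerProductSpace ℂ E] [FiniteDimensional ℂ E] (T : ι → E →ₗ[ℂ] E)
    (hsymm : ∀ i, (T i).IsSymmetric) (hTcomm : Pairwise (Function.onFun Commute T)) :
    ∃ (b : OrthonormalBasis (Fin (Module.finrank ℂ E)) ℂ E)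
      (μ : ι → Fin (Module.finrank ℂ E) → ℂ),
      ∀ i k, T i (b k) = μ i k • b k := by
  classical
  have hInt : DirectSum.IsInternal (fun χ : ι → ℂ => ⨅ i, eigenspace (T i) (χ i)) :=
    LinearMap.IsSymmetric.LinearMap.IsSymmetric.directSum_isInternal_of_pairwise_commute
      hsymm hTcomm
  have hOrth := LinearMap.IsSymmetric.orthogonalFamily_iInf_eigenspaces hsymm
  have hIndep : iSupIndep (fun χ : ι → ℂ => ⨅ i, eigenspace (T i) (χ i)) :=
    hInt.submodule_iSupIndep
  have hfin : Fintype {χ : ι → ℂ // (⨅ i, eigenspace (T i) (χ i)) ≠ ⊥} :=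
    hIndep.fintypeNeBotOfFiniteDimensional
  let κ := {χ : ι → ℂ // (⨅ i, eigenspace (T i) (χ i)) ≠ ⊥}
  let V' : κ → Submodule ℂ E := fun χ => ⨅ i, eigenspace (T i) (χ.1 i)
  have hOrth' : OrthogonalFamily ℂ (fun χ : κ => ↥(V' χ)) (fun χ => (V' χ).subtypeₗᵢ) :=
    fun χ χ' h => hOrth (Subtype.coe_injective.ne_iff.mpr h)
  have hsup : ⨆ χ : κ, V' χ = ⊤ := by
    rw [eq_top_iff, ← LinearMap.IsSymmetric.iSup_iInf_eq_top_of_commute hsymm hTcomm]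
    apply iSup_le
    intro χ
    by_cases h : (⨅ i, eigenspace (T i) (χ i)) = ⊥
    · rw [h]; exact bot_le
    · exact le_iSup_of_le (⟨χ, h⟩ : κ) le_rfl
  have hInt' : DirectSum.IsInternal V' := by
    apply hOrth'.isInternal_iff.mpr
    rw [hsup, Submodule.top_orthogonal_eq_bot]
  let b0 := hInt'.collectedOrthonormalBasis hOrth'
    (fun χ => stdOrthonormalBasis ℂ (V' χ))
  have hcard : Fintype.card (Σ χ : κ, Fin (Module.finrank ℂ (V' χ))) = Module.finrank ℂ E :=
    (Module.finrank_eq_card_basis b0.toBasis).symm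
  let e := Fintype.equivFinOfCardEq hcard
  have hmem : ∀ k, (b0.reindex e) k ∈ V' (e.symm k).1 := by
    intro k
    rw [OrthonormalBasis.reindex_apply]
    exact hInt'.collectedOrthonormalBasis_mem hOrth' _ _
  refine ⟨b0.reindex e, fun i k => ((e.symm k).1.1 i), fun i k => ?_⟩
  exact mem_eigenspace_iff.mp ((Submodule.mem_iInf _).mp (hmem k) i)

private lemma toEuclideanLin_mul {d : ℕ} (A B : Matrix (Fin d) (Fin d) ℂ) :
    Matrix.toEuclideanLin (A * B) = (Matrix.toEuclideanLin A) ∘ₗ (Matrix.toEuclideanLin B) := by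
  ext x
  simp [Matrix.toEuclideanLin_apply, Matrix.mulVec_mulVec]

/-- Simultaneous unitary diagonalization of a finite commuting family of Hermitian
matrices, in the form of a common orthonormal eigenbasis, with real eigenvalues. -/
private lemma simdiag {d : ℕ} {ι : Type} [Fintype ι] (C : ι → Matrix (Fin d) (Fin d) ℂ)
    (hherm : ∀ i, (C i).IsHermitian) (hcomm : ∀ i j, Commute (C i) (C j)) :
    ∃ (b : OrthonormalBasis (Fin d) ℂ (EuclideanSpace ℂ (Fin d))) (μ : ι → Fin d → ℂ),
      (∀ i k, Matrix.toEuclideanLin (C i) (b k) = μ i k • b k) ∧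
      (∀ i k, star (μ i k) = μ i k) := by
  classical
  set T : ι → EuclideanSpace ℂ (Fin d) →ₗ[ℂ] EuclideanSpace ℂ (Fin d) :=
    fun i => Matrix.toEuclideanLin (C i) with hT
  have hsymm : ∀ i, (T i).IsSymmetric := fun i =>
    (Matrix.isHermitian_iff_isSymmetric).mp (hherm i)
  have hTcomm : Pairwise (Function.onFun Commute T) := by
    intro i j _
    show T i * T j = T j * T i
    show (T i) ∘ₗ (T j) = (T j) ∘ₗ (T i)
    rw [hT]
    simp only
    rw [← toEuclideanLin_mul, ← toEuclideanLin_mul, (hcomm i j).eq]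
  obtain ⟨b, μ, hb⟩ := exists_onb_of_commute T hsymm hTcomm
  have hrank : Module.finrank ℂ (EuclideanSpace ℂ (Fin d)) = d := finrank_euclideanSpace_fin
  refine ⟨b.reindex (finCongr hrank), fun i k => μ i ((finCongr hrank).symm k), ?_, ?_⟩
  · intro i k
    rw [OrthonormalBasis.reindex_apply]
    exact hb i _
  · intro i k
    have hne : b ((finCongr hrank).symm k) ≠ 0 := b.toBasis.ne_zero _
    have hev : HasEigenvalue (T i) (μ i ((finCongr hrank).symm k)) :=
      hasEigenvalue_of_hasEigenvector ⟨mem_eigenspace_iff.mpr (hb i _), hne⟩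
    exact (hsymm i).conj_eigenvalue_eq_self hev

private lemma vecMulVec_mulVec {d : ℕ} (v w x : Fin d → ℂ) :
    Matrix.vecMulVec v w *ᵥ x = (w ⬝ᵥ x) • v := by
  funext a
  simp only [Matrix.vecMulVec_apply, Matrix.mulVec, dotProduct, Pi.smul_apply,
    smul_eq_mul, Finset.sum_mul]
  apply Finset.sum_congr rfl
  intro i _
  ring

/-- A matrix is recovered from an orthonormal eigenbasis as a combination of
outer products. -/
private lemma matrix_eq_sum_outer {d : ℕ} (M : Matrix (Fin d) (Fin d) ℂ)
    (b : OrthonormalBasis (Fin d) ℂ (EuclideanSpace ℂ (Fin d))) (μ : Fin d → ℂ)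
    (h : ∀ k, Matrix.toEuclideanLin M (b k) = μ k • b k) :
    M = ∑ k, μ k • Matrix.vecMulVec (WithLp.equiv 2 (Fin d → ℂ) (b k))
      (star (WithLp.equiv 2 (Fin d → ℂ) (b k))) := by
  have horth := orthonormal_iff_ite.mp b.orthonormal
  have key : ∀ k m : Fin d, Matrix.toEuclideanLin
      (μ k • Matrix.vecMulVec (WithLp.equiv 2 (Fin d → ℂ) (b k))
        (star (WithLp.equiv 2 (Fin d → ℂ) (b k)))) (b m)
      = if k = m then μ m • b m else 0 := by
    intro k m
    rw [_root_.map_smul]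
    have houter : Matrix.toEuclideanLin (Matrix.vecMulVec (WithLp.equiv 2 (Fin d → ℂ) (b k))
        (star (WithLp.equiv 2 (Fin d → ℂ) (b k)))) (b m)
        = (if k = m then (1:ℂ) else 0) • b k := by
      rw [Matrix.toEuclideanLin_apply, vecMulVec_mulVec]
      have hdot : star (WithLp.equiv 2 (Fin d → ℂ) (b k)) ⬝ᵥ (WithLp.equiv 2 (Fin d → ℂ) (b m))
          = if k = m then (1:ℂ) else 0 := by
        rw [← horth k m]
        simp [dotProduct, PiLp.inner_apply, mul_comm]
      rw [show (b m).ofLp = WithLp.equiv 2 (Fin d → ℂ) (b m) from rfl, hdot]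
      apply ((WithLp.equiv 2 (Fin d → ℂ)).symm_apply_eq).mpr ?_
      split_ifs <;> simp
    rw [LinearMap.smul_apply, houter]
    by_cases hkm : k = m
    · subst hkm; simp
    · simp [hkm]
  apply Matrix.toEuclideanLin.injective
  apply b.toBasis.ext
  intro m
  rw [OrthonormalBasis.coe_toBasis, h m, map_sum, LinearMap.sum_apply,
    Finset.sum_congr rfl (fun k _ => key k m), Finset.sum_ite_eq' Finset.univ m
      (fun _ => μ m • b m)]
  simp

end Aux

/-- for a block matrix with normal, mutually commuting blocks,
separability is equivalent to positive semidefiniteness. -/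
theorem separable_iff_posSemidef_of_normal_commuting {n d : ℕ}
    (B : Fin n → Fin n → Matrix (Fin d) (Fin d) ℂ)
    (hnormal : ∀ i j : Fin n, B i j * (B i j)ᴴ = (B i j)ᴴ * B i j)
    (hcomm : ∀ i j i' j' : Fin n, B i j * B i' j' = B i' j' * B i j) :
    MatSeparable (∑ i : Fin n, ∑ j : Fin n,
        (Matrix.single i j (1 : ℂ)) ⊗ₖ (B i j))
      ↔ (∑ i : Fin n, ∑ j : Fin n,
          (Matrix.single i j (1 : ℂ)) ⊗ₖ (B i j)).PosSemidef := by
  classical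
  set T := ∑ i : Fin n, ∑ j : Fin n, (Matrix.single i j (1 : ℂ)) ⊗ₖ (B i j) with hTdef
  constructor
  · -- separable → PSD
    rintro ⟨s, P, Q, hP, hQ, hrep⟩
    rw [hrep]
    apply Finset.sum_induction _ _ (fun a b ha hb => ?_) Matrix.PosSemidef.zero
      (fun i _ => kron_posSemidef (hP i) (hQ i))
    refine Matrix.PosSemidef.of_dotProduct_mulVec_nonneg ?_ ?_
    · exact ha.1.add hb.1
    · intro x
      rw [Matrix.add_mulVec, dotProduct_add]
      exact add_nonneg (ha.dotProduct_mulVec_nonneg x) (hb.dotProduct_mulVec_nonneg x)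
  · -- PSD → separable
    intro hT
    have hadj : ∀ p q : Fin n, (B p q)ᴴ = B q p := by
      intro p q
      ext a c
      have h1 := Matrix.IsHermitian.apply hT.1 (q,a) (p,c)
      rw [hTdef] at h1
      rw [blockEntry, blockEntry] at h1
      simpa [Matrix.conjTranspose_apply] using h1
    -- the commuting Hermitian family
    set C : Fin n × Fin n × Bool → Matrix (Fin d) (Fin d) ℂ := fun x =>
      if x.2.2 then Complex.I • (B x.1 x.2.1 - B x.2.1 x.1)
        else B x.1 x.2.1 + B x.2.1 x.1 with hCdef
    have hc : ∀ p q r s : Fin n, Commute (B p q) (B r s) := fun p q r s => hcomm p q r s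
    have hherm : ∀ x, (C x).IsHermitian := by
      rintro ⟨i, j, (_|_)⟩ <;> unfold C <;> simp only [if_true, if_false, Bool.false_eq_true]
      · unfold Matrix.IsHermitian
        rw [Matrix.conjTranspose_add, hadj, hadj, add_comm]
      · unfold Matrix.IsHermitian
        rw [Matrix.conjTranspose_smul, Matrix.conjTranspose_sub, hadj, hadj, Complex.star_def,
          Complex.conj_I, neg_smul, ← smul_neg, neg_sub]
    have hcommC : ∀ x y, Commute (C x) (C y) := by
      rintro ⟨i, j, bx⟩ ⟨i', j', by'⟩
      have base : Commute (B i j + B j i) (B i' j' + B j' i') :=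
        ((hc i j i' j').add_right (hc i j j' i')).add_left
          ((hc j i i' j').add_right (hc j i j' i'))
      have base2 : Commute (B i j + B j i) (B i' j' - B j' i') :=
        ((hc i j i' j').sub_right (hc i j j' i')).add_left
          ((hc j i i' j').sub_right (hc j i j' i'))
      have base3 : Commute (B i j - B j i) (B i' j' + B j' i') :=
        ((hc i j i' j').add_right (hc i j j' i')).sub_left
          ((hc j i i' j').add_right (hc j i j' i'))
      have base4 : Commute (B i j - B j i) (B i' j' - B j' i') :=
        ((hc i j i' j').sub_right (hc i j j' i')).sub_left
          ((hc j i i' j').sub_right (hc j i j' i'))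
      cases bx <;> cases by' <;> unfold C <;>
        simp only [if_true, if_false, Bool.false_eq_true] <;>
        first
          | exact base
          | exact base2.smul_right _
          | exact base3.smul_left _
          | exact (base4.smul_left _).smul_right _
    obtain ⟨b, μ, heig, hreal⟩ := simdiag C hherm hcommC
    have horth := orthonormal_iff_ite.mp b.orthonormal
    set D : Fin n → Fin n → Fin d → ℂ := fun i j k =>
      (μ (i,j,false) k - Complex.I * μ (i,j,true) k) / 2 with hDdef
    have hBC : ∀ i j, B i j = (1/2 : ℂ) • C (i,j,false) + (-(Complex.I)/2) • C (i,j,true) := by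
      intro i j
      unfold C
      simp only [if_true, if_false, Bool.false_eq_true]
      ext a c
      simp only [Matrix.add_apply, Matrix.smul_apply, Matrix.sub_apply, smul_eq_mul]
      linear_combination ((B i j a c - B j i a c)/2) * Complex.I_sq
    have hBeig : ∀ i j k, Matrix.toEuclideanLin (B i j) (b k) = D i j k • b k := by
      intro i j k
      rw [hBC i j, map_add, _root_.map_smul, _root_.map_smul, LinearMap.add_apply,
        LinearMap.smul_apply, LinearMap.smul_apply, heig, heig, smul_smul, smul_smul,
        ← add_smul]
      congr 1
      rw [hDdef]
      ring
    have hsymmf : ∀ i j k, μ ((j,i,false) : Fin n × Fin n × Bool) k = μ (i,j,false) k := by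
      intro i j k
      have hCeq : C (j,i,false) = C (i,j,false) := by
        unfold C
        simp only [Bool.false_eq_true, if_false]
        rw [add_comm]
      have h1 := heig (j,i,false) k
      rw [hCeq, heig (i,j,false) k] at h1
      exact smul_left_injective ℂ (b.toBasis.ne_zero k) h1.symm
    have hsymmt : ∀ i j k, μ ((j,i,true) : Fin n × Fin n × Bool) k = - μ (i,j,true) k := by
      intro i j k
      have hCeq : C (j,i,true) = - C (i,j,true) := by
        unfold C
        simp only [if_true]
        rw [← smul_neg, neg_sub]
      have h1 := heig (j,i,true) k
      rw [hCeq] at h1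
      rw [map_neg, LinearMap.neg_apply, heig (i,j,true) k, ← neg_smul] at h1
      exact smul_left_injective ℂ (b.toBasis.ne_zero k) h1.symm
    have hDconj : ∀ i j k, star (D i j k) = D j i k := by
      intro i j k
      rw [hDdef]
      simp only [star_div₀, star_sub, star_mul', Complex.star_def, Complex.conj_I,
        map_ofNat]
      simp only [← Complex.star_def]
      rw [hreal, hreal, hsymmf i j k, hsymmt i j k]
      ring
    set A : Fin d → Matrix (Fin n) (Fin n) ℂ := fun k =>
      Matrix.of fun i j => D i j k with hAdef
    have hBsum : ∀ i j, B i j = ∑ k, D i j k •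
        Matrix.vecMulVec (WithLp.equiv 2 (Fin d → ℂ) (b k))
          (star (WithLp.equiv 2 (Fin d → ℂ) (b k))) := by
      intro i j
      exact matrix_eq_sum_outer _ b _ (hBeig i j)
    have hTS : T = ∑ k, (A k) ⊗ₖ (Matrix.vecMulVec (WithLp.equiv 2 (Fin d → ℂ) (b k))
        (star (WithLp.equiv 2 (Fin d → ℂ) (b k)))) := by
      ext ⟨p,a⟩ ⟨q,c⟩
      rw [hTdef, blockEntry]
      have h1 := congrFun (congrFun (hBsum p q) a) c
      rw [Matrix.sum_apply] at h1
      rw [Matrix.sum_apply]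
      rw [h1]
      apply Finset.sum_congr rfl
      intro k _
      simp [kroneckerMap_apply, hAdef, mul_comm]
    have hmv : ∀ i j k, B i j *ᵥ (WithLp.equiv 2 (Fin d → ℂ) (b k))
        = D i j k • (WithLp.equiv 2 (Fin d → ℂ) (b k)) := by
      intro i j k
      have h := hBeig i j k
      rw [Matrix.toEuclideanLin_apply] at h
      apply_fun (WithLp.equiv 2 (Fin d → ℂ)) at h
      simpa using h
    have hnorm1 : ∀ k, ∑ a, star ((WithLp.equiv 2 (Fin d → ℂ) (b k)) a)
        * ((WithLp.equiv 2 (Fin d → ℂ) (b k)) a) = 1 := by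
      intro k
      have h1 : (inner ℂ (b k) (b k) : ℂ) = 1 := by simp [horth]
      rw [← h1]
      rw [PiLp.inner_apply]
      exact Finset.sum_congr rfl fun a _ => by rw [mul_comm]; rfl
    have hApsd : ∀ k, (A k).PosSemidef := by
      intro k
      refine Matrix.PosSemidef.of_dotProduct_mulVec_nonneg ?_ ?_
      · ext i j
        rw [Matrix.conjTranspose_apply]
        exact hDconj j i k
      · intro x
        set y : Fin n × Fin d → ℂ := fun p =>
          x p.1 * (WithLp.equiv 2 (Fin d → ℂ) (b k)) p.2 with hy
        have h0 := hT.dotProduct_mulVec_nonneg y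
        have hTy : ∀ i a, (T *ᵥ y) (i,a)
            = (A k *ᵥ x) i * (WithLp.equiv 2 (Fin d → ℂ) (b k)) a := by
          intro i a
          show (fun jc => T (i,a) jc) ⬝ᵥ y = _
          rw [dotProduct, Fintype.sum_prod_type]
          have hinner : ∀ j, ∑ c, T (i,a) (j,c) * y (j,c)
              = (D i j k * x j) * (WithLp.equiv 2 (Fin d → ℂ) (b k)) a := by
            intro j
            have h2 := congrFun (hmv i j k) a
            simp only [Pi.smul_apply, smul_eq_mul] at h2
            calc ∑ c, T (i,a) (j,c) * y (j,c)
                = x j * ∑ c, B i j a c * (WithLp.equiv 2 (Fin d → ℂ) (b k)) c := by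
                  rw [Finset.mul_sum]
                  apply Finset.sum_congr rfl
                  intro c _
                  rw [hTdef, blockEntry, hy]
                  ring
              _ = x j * (B i j *ᵥ (WithLp.equiv 2 (Fin d → ℂ) (b k))) a := rfl
              _ = (D i j k * x j) * (WithLp.equiv 2 (Fin d → ℂ) (b k)) a := by
                  rw [h2]; ring
          rw [Finset.sum_congr rfl (fun j _ => hinner j), ← Finset.sum_mul]
          congr 1
        have hval : star y ⬝ᵥ (T *ᵥ y) = star x ⬝ᵥ (A k *ᵥ x) := by
          rw [dotProduct, Fintype.sum_prod_type]
          calc ∑ i, ∑ a, star (y (i,a)) * (T *ᵥ y) (i,a)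
              = (∑ i, star (x i) * (A k *ᵥ x) i)
                * (∑ a, star ((WithLp.equiv 2 (Fin d → ℂ) (b k)) a)
                  * ((WithLp.equiv 2 (Fin d → ℂ) (b k)) a)) := by
                rw [Finset.sum_mul_sum]
                apply Finset.sum_congr rfl
                intro i _
                apply Finset.sum_congr rfl
                intro a _
                rw [hTy i a, hy]
                simp only [star_mul']
                ring
            _ = star x ⬝ᵥ (A k *ᵥ x) := by
                rw [hnorm1 k, mul_one]
                rfl
        rw [← hval]
        exact h0
    exact ⟨d, A, fun k => Matrix.vecMulVec (WithLp.equiv 2 (Fin d → ℂ) (b k))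
      (star (WithLp.equiv 2 (Fin d → ℂ) (b k))), hApsd,
      fun k => outer_posSemidef _, hTS⟩
end

section
/- Let B_{ij} ∈ M(d,ℂ) for i,j = 1,…,n be matrices such that every B_{ij} is normal and any two of them commute, and suppose the block matrix T = ∑_{i,j=1}^n E_{ij} ⊗ B_{ij} is positive semidefinite. Then T admits a separable decomposition with at most n·d rank-one product terms: there exist nonnegative reals λ_j^k and vectors v_j^k ∈ ℂ^n, u_k ∈ ℂ^d (k = 1,…,d, j = 0,…,n−1) such that T = ∑_{k=1}^d ∑_{j=0}^{n−1} λ_j^k (v_j^k (v_j^k)†) ⊗ (u_k u_k†). -/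
open Matrix Kronecker
open scoped ComplexOrder

section AuxNormal

open Module.End LinearMap
open scoped InnerProductSpace

variable {E : Type*} [NormedAddCommGroup E] [InnerProductSpace ℂ E] [FiniteDimensional ℂ E]

lemma adjoint_smul_one (μ : ℂ) (S : E →ₗ[ℂ] E) :
    adjoint (S - μ • 1) = adjoint S - (starRingEnd ℂ) μ • 1 := by
  rw [← LinearMap.star_eq_adjoint, ← LinearMap.star_eq_adjoint]
  simp [star_sub, star_smul, Complex.star_def]

/-- For a normal operator, eigenvectors of `S` for `μ` are eigenvectors of `adjoint S`
for `conj μ`. -/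
lemma normal_adjoint_eigen {S : E →ₗ[ℂ] E} (hS : S * adjoint S = adjoint S * S)
    {μ : ℂ} {x : E} (hx : S x = μ • x) : adjoint S x = (starRingEnd ℂ) μ • x := by
  set R : E →ₗ[ℂ] E := S - μ • 1 with hR
  have hRadj : adjoint R = adjoint S - (starRingEnd ℂ) μ • 1 := adjoint_smul_one μ S
  have hRnorm : R * adjoint R = adjoint R * R := by
    rw [hRadj, hR]
    simp only [sub_mul, mul_sub, smul_mul_assoc, mul_smul_comm, one_mul, mul_one, hS,
      smul_sub, smul_smul, mul_comm]
    abel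
  have hRx : R x = 0 := by simp [hR, hx, LinearMap.sub_apply, LinearMap.smul_apply]
  have h0 : adjoint R x = 0 := by
    have h1 : ⟪adjoint R x, adjoint R x⟫_ℂ = ⟪x, R (adjoint R x)⟫_ℂ :=
      LinearMap.adjoint_inner_left R _ _
    have h2 : R (adjoint R x) = adjoint R (R x) := by
      have := congrArg (fun T => T x) hRnorm
      simpa using this
    rw [h2, hRx, _root_.map_zero, inner_zero_right] at h1
    exact inner_self_eq_zero.mp h1
  have h3 := congrArg (fun T => T x) hRadj
  simp only [LinearMap.sub_apply, LinearMap.smul_apply, Module.End.one_apply] at h3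
  rw [h0] at h3
  exact sub_eq_zero.mp h3.symm


lemma sym_re_part {S : E →ₗ[ℂ] E} : IsSymmetric ((1/2 : ℂ) • (S + adjoint S)) := by
  rw [LinearMap.isSymmetric_iff_isSelfAdjoint, LinearMap.isSelfAdjoint_iff',
    ← LinearMap.star_eq_adjoint]
  simp [star_smul, star_add, Complex.star_def, LinearMap.star_eq_adjoint,
    LinearMap.adjoint_adjoint, add_comm]

lemma sym_im_part {S : E →ₗ[ℂ] E} : IsSymmetric ((Complex.I/2 : ℂ) • (adjoint S - S)) := by
  rw [LinearMap.isSymmetric_iff_isSelfAdjoint, LinearMap.isSelfAdjoint_iff',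
    ← LinearMap.star_eq_adjoint]
  simp only [star_smul, star_sub, Complex.star_def, LinearMap.star_eq_adjoint,
    LinearMap.adjoint_adjoint, map_div₀, Complex.conj_I, map_ofNat]
  rw [neg_div, neg_smul, ← smul_neg, neg_sub]

lemma re_part_add_im_part {S : E →ₗ[ℂ] E} :
    (1/2 : ℂ) • (S + adjoint S) + Complex.I • ((Complex.I/2 : ℂ) • (adjoint S - S)) = S := by
  rw [smul_smul]
  have h : Complex.I * (Complex.I / 2) = -(1/2) := by
    rw [show Complex.I * (Complex.I / 2) = Complex.I * Complex.I / 2 by ring, Complex.I_mul_I]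
    norm_num
  rw [h]
  module

lemma re_part_sub_im_part {S : E →ₗ[ℂ] E} :
    (1/2 : ℂ) • (S + adjoint S) - Complex.I • ((Complex.I/2 : ℂ) • (adjoint S - S))
      = adjoint S := by
  rw [smul_smul]
  have h : Complex.I * (Complex.I / 2) = -(1/2) := by
    rw [show Complex.I * (Complex.I / 2) = Complex.I * Complex.I / 2 by ring, Complex.I_mul_I]
    norm_num
  rw [h]
  module

lemma commute_re_im {S : E →ₗ[ℂ] E} (hS : S * adjoint S = adjoint S * S) :
    Commute ((1/2 : ℂ) • (S + adjoint S)) ((Complex.I/2 : ℂ) • (adjoint S - S)) := by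
  apply Commute.smul_left
  apply Commute.smul_right
  show _ = _
  simp only [mul_sub, sub_mul, add_mul, mul_add, hS]
  abel

/-- The eigenspaces of a normal operator span. -/
lemma normal_iSup_eigenspace {S : E →ₗ[ℂ] E} (hS : S * adjoint S = adjoint S * S) :
    ⨆ μ : ℂ, eigenspace S μ = ⊤ := by
  have htop := LinearMap.IsSymmetric.iSup_iSup_eigenspace_inf_eigenspace_eq_top_of_commute
    (sym_re_part (S := S)) (sym_im_part (S := S)) (commute_re_im hS)
  rw [eq_top_iff, ← htop]
  refine iSup_le fun α => iSup_le fun γ => fun x hx => ?_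
  obtain ⟨h1, h2⟩ := Submodule.mem_inf.mp hx
  rw [mem_eigenspace_iff] at h1 h2
  refine Submodule.mem_iSup_of_mem (α + Complex.I * γ) (mem_eigenspace_iff.mpr ?_)
  have h3 := congrArg (fun T : E →ₗ[ℂ] E => T x) (re_part_add_im_part (S := S))
  simp only [LinearMap.add_apply, LinearMap.smul_apply, LinearMap.sub_apply] at h3
  simp only [LinearMap.smul_apply, LinearMap.add_apply, LinearMap.sub_apply] at h1 h2
  rw [h1, h2] at h3
  rw [← h3, smul_smul, add_smul]

/-- Fuglede's theorem, finite-dimensional case. -/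
lemma fuglede {S M : E →ₗ[ℂ] E} (hS : S * adjoint S = adjoint S * S)
    (hMS : M * S = S * M) : M * adjoint S = adjoint S * M := by
  have key : ∀ μ : ℂ, eigenspace S μ ≤ LinearMap.ker (M * adjoint S - adjoint S * M) := by
    intro μ x hx
    rw [mem_eigenspace_iff] at hx
    have hMx : S (M x) = μ • M x := by
      have : S (M x) = M (S x) := by
        have := congrArg (fun T : E →ₗ[ℂ] E => T x) hMS
        simpa using this.symm
      rw [this, hx, _root_.map_smul]
    have e1 : adjoint S x = (starRingEnd ℂ) μ • x := normal_adjoint_eigen hS hx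
    have e2 : adjoint S (M x) = (starRingEnd ℂ) μ • M x := normal_adjoint_eigen hS hMx
    simp only [LinearMap.mem_ker, LinearMap.sub_apply, Module.End.mul_apply, e1, e2,
      _root_.map_smul, sub_self]
  have : ⊤ ≤ LinearMap.ker (M * adjoint S - adjoint S * M) := by
    rw [← normal_iSup_eigenspace hS]
    exact iSup_le key
  have hker : LinearMap.ker (M * adjoint S - adjoint S * M) = ⊤ := top_unique this
  have := LinearMap.ker_eq_top.mp hker
  exact sub_eq_zero.mp this

end AuxNormal

section Stage3

open Module.End LinearMap Matrix
open scoped InnerProductSpace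

set_option maxHeartbeats 1000000 in
lemma exists_eigenbasis {d n : ℕ} (B : Fin n → Fin n → Matrix (Fin d) (Fin d) ℂ)
    (hnormal : ∀ i j, B i j * (B i j)ᴴ = (B i j)ᴴ * B i j)
    (hcomm : ∀ i j i' j', B i j * B i' j' = B i' j' * B i j) :
    ∃ (u : Fin d → (Fin d → ℂ)) (β : Fin n → Fin n → Fin d → ℂ),
      (∀ k l, star (u k) ⬝ᵥ u l = if k = l then 1 else 0) ∧
      (∀ x : Fin d → ℂ, ∃ c : Fin d → ℂ, x = ∑ k, c k • u k) ∧
      (∀ i j k, B i j *ᵥ u k = β i j k • u k) ∧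
      (∀ i j k, (B i j)ᴴ *ᵥ u k = (starRingEnd ℂ) (β i j k) • u k) := by
  classical
  let E := EuclideanSpace ℂ (Fin d)
  let N : Fin n × Fin n → (E →ₗ[ℂ] E) := fun p => Matrix.toEuclideanLin (B p.1 p.2)
  have hmul : ∀ (M M' : Matrix (Fin d) (Fin d) ℂ),
      Matrix.toEuclideanLin (M * M') = Matrix.toEuclideanLin M * Matrix.toEuclideanLin M' := by
    intro M M'
    refine LinearMap.ext fun v => ?_
    show Matrix.toEuclideanLin (M * M') v = Matrix.toEuclideanLin M (Matrix.toEuclideanLin M' v)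
    simp [Matrix.toEuclideanLin_apply, Matrix.mulVec_mulVec]
  have hadj : ∀ p, adjoint (N p) = Matrix.toEuclideanLin (B p.1 p.2)ᴴ :=
    fun p => (Matrix.toEuclideanLin_conjTranspose_eq_adjoint _).symm
  have hc1 : ∀ p q, N p * N q = N q * N p := by
    intro p q
    show Matrix.toEuclideanLin _ * Matrix.toEuclideanLin _ = _
    rw [← hmul, ← hmul, hcomm]
  have hnormN : ∀ p, N p * adjoint (N p) = adjoint (N p) * N p := by
    intro p
    rw [hadj]
    show Matrix.toEuclideanLin _ * Matrix.toEuclideanLin _ = _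
    rw [← hmul, ← hmul, hnormal]
  have hc2 : ∀ p q, N p * adjoint (N q) = adjoint (N q) * N p :=
    fun p q => fuglede (hnormN q) (hc1 p q)
  have hc3 : ∀ p q, adjoint (N p) * adjoint (N q) = adjoint (N q) * adjoint (N p) := by
    intro p q
    have h := congrArg star (hc1 q p)
    rwa [StarMul.star_mul, StarMul.star_mul, LinearMap.star_eq_adjoint,
      LinearMap.star_eq_adjoint] at h
  have hc4 : ∀ p q, adjoint (N p) * N q = N q * adjoint (N p) := fun p q => (hc2 q p).symm
  let Tf : (Fin n × Fin n) ⊕ (Fin n × Fin n) → (E →ₗ[ℂ] E) :=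
    Sum.elim (fun p => (1/2 : ℂ) • (N p + adjoint (N p)))
      (fun p => (Complex.I/2 : ℂ) • (adjoint (N p) - N p))
  have hsym : ∀ l, (Tf l).IsSymmetric := by
    rintro (p | p)
    · exact sym_re_part
    · exact sym_im_part
  have C : ∀ {a b : E →ₗ[ℂ] E}, a * b = b * a → Commute a b := fun h => h
  have K1 : ∀ p q, Commute (N p + adjoint (N p)) (N q + adjoint (N q)) :=
    fun p q => ((C (hc1 p q)).add_right (C (hc2 p q))).add_left
      ((C (hc4 p q)).add_right (C (hc3 p q)))
  have K2 : ∀ p q, Commute (N p + adjoint (N p)) (adjoint (N q) - N q) :=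
    fun p q => ((C (hc2 p q)).sub_right (C (hc1 p q))).add_left
      ((C (hc3 p q)).sub_right (C (hc4 p q)))
  have K3 : ∀ p q, Commute (adjoint (N p) - N p) (adjoint (N q) - N q) :=
    fun p q => ((C (hc3 p q)).sub_right (C (hc4 p q))).sub_left
      ((C (hc2 p q)).sub_right (C (hc1 p q)))
  have hcommute : ∀ l m, Commute (Tf l) (Tf m) := by
    rintro (p | p) (q | q)
    · exact ((K1 p q).smul_right _).smul_left _
    · exact ((K2 p q).smul_right _).smul_left _
    · exact (((K2 q p).symm.smul_right _)).smul_left _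
    · exact ((K3 p q).smul_right _).smul_left _
  have htop := LinearMap.IsSymmetric.iSup_iInf_eq_top_of_commute hsym
    (fun {l m} _ => hcommute l m)
  have horth := LinearMap.IsSymmetric.orthogonalFamily_iInf_eigenspaces hsym
  set V : (((Fin n × Fin n) ⊕ (Fin n × Fin n)) → ℂ) → Submodule ℂ E :=
    fun χ => ⨅ l, eigenspace (Tf l) (χ l) with hV
  have hint : DirectSum.IsInternal V :=
    (DirectSum.isInternal_submodule_iff_iSupIndep_and_iSup_eq_top V).mpr
      ⟨horth.independent, htop⟩
  -- restrict to the (finite) support of `V`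
  haveI : WellFoundedGT (Submodule ℂ E) := inferInstance
  have hfin : Set.Finite {χ | V χ ≠ ⊥} :=
    WellFoundedGT.finite_ne_bot_of_iSupIndep hint.submodule_iSupIndep
  haveI : Finite {χ // V χ ≠ ⊥} := hfin.to_subtype
  haveI : Fintype {χ // V χ ≠ ⊥} := Fintype.ofFinite _
  have hint' : DirectSum.IsInternal (fun χ : {χ // V χ ≠ ⊥} => V χ.1) := by
    rw [DirectSum.isInternal_submodule_iff_iSupIndep_and_iSup_eq_top]
    constructor
    · exact hint.submodule_iSupIndep.comp Subtype.coe_injective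
    · rw [eq_top_iff, ← hint.submodule_iSup_eq_top]
      refine iSup_le fun χ => ?_
      by_cases hχ : V χ = ⊥
      · rw [hχ]; exact bot_le
      · exact le_iSup (fun χ : {χ // V χ ≠ ⊥} => V χ.1) ⟨χ, hχ⟩
  have horth' := horth.comp
    (f := (Subtype.val : {χ // V χ ≠ ⊥} → (((Fin n × Fin n) ⊕ (Fin n × Fin n)) → ℂ)))
    Subtype.coe_injective
  have hd : Module.finrank ℂ E = d := finrank_euclideanSpace_fin
  let bas := hint'.subordinateOrthonormalBasis hd horth'
  let χ : Fin d → ((Fin n × Fin n) ⊕ (Fin n × Fin n)) → ℂ :=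
    fun k => (hint'.subordinateOrthonormalBasisIndex hd k horth').1
  have hmem : ∀ k, bas k ∈ ⨅ l, eigenspace (Tf l) (χ k l) :=
    fun k => hint'.subordinateOrthonormalBasis_subordinate hd k horth'
  have heig : ∀ k l, Tf l (bas k) = χ k l • bas k :=
    fun k l => mem_eigenspace_iff.mp ((Submodule.mem_iInf _).mp (hmem k) l)
  have hne : ∀ k, bas k ≠ 0 := fun k => bas.orthonormal.ne_zero k
  have hreal : ∀ k l, (starRingEnd ℂ) (χ k l) = χ k l := fun k l =>
    (hsym l).conj_eigenvalue_eq_self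
      (hasEigenvalue_of_hasEigenvector ⟨mem_eigenspace_iff.mpr (heig k l), hne k⟩)
  set β : Fin n → Fin n → Fin d → ℂ :=
    fun i j k => χ k (Sum.inl (i, j)) + Complex.I * χ k (Sum.inr (i, j)) with hβ
  have hNeig : ∀ p k, N p (bas k) = (β p.1 p.2 k) • bas k := by
    intro p k
    have h3 := congrArg (fun T : E →ₗ[ℂ] E => T (bas k)) (re_part_add_im_part (S := N p))
    have e1 := heig k (Sum.inl p)
    have e2 := heig k (Sum.inr p)
    simp only [Tf, Sum.elim_inl, Sum.elim_inr] at e1 e2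
    simp only [LinearMap.add_apply, LinearMap.smul_apply, LinearMap.sub_apply] at h3 e1 e2
    rw [e1, e2] at h3
    rw [← h3, smul_smul, ← add_smul, hβ]
  have hconjβ : ∀ p k, (starRingEnd ℂ) (β p.1 p.2 k)
      = χ k (Sum.inl p) - Complex.I * χ k (Sum.inr p) := by
    intro p k
    rw [hβ]
    simp only [_root_.map_add, _root_.map_mul, Complex.conj_I, hreal]
    ring
  have hNadj : ∀ p k, adjoint (N p) (bas k) = (starRingEnd ℂ) (β p.1 p.2 k) • bas k := by
    intro p k
    have h3 := congrArg (fun T : E →ₗ[ℂ] E => T (bas k)) (re_part_sub_im_part (S := N p))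
    have e1 := heig k (Sum.inl p)
    have e2 := heig k (Sum.inr p)
    simp only [Tf, Sum.elim_inl, Sum.elim_inr] at e1 e2
    simp only [LinearMap.add_apply, LinearMap.smul_apply, LinearMap.sub_apply] at h3 e1 e2
    rw [e1, e2] at h3
    rw [← h3, smul_smul, ← sub_smul, hconjβ p k]
  refine ⟨fun k => WithLp.equiv 2 (Fin d → ℂ) (bas k), β, ?_, ?_, ?_, ?_⟩
  · intro k l
    have h := orthonormal_iff_ite.mp bas.orthonormal k l
    rw [PiLp.inner_apply] at h
    simpa [dotProduct, RCLike.inner_apply, mul_comm] using h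
  · intro x
    refine ⟨fun k => ⟪bas k, (WithLp.equiv 2 (Fin d → ℂ)).symm x⟫_ℂ, ?_⟩
    have h := congrArg (WithLp.linearEquiv 2 ℂ (Fin d → ℂ))
      (bas.sum_repr' ((WithLp.equiv 2 (Fin d → ℂ)).symm x))
    rw [_root_.map_sum] at h
    simp only [_root_.map_smul] at h
    simpa using h.symm
  · intro i j k
    have h := congrArg (WithLp.equiv 2 (Fin d → ℂ)) (hNeig (i, j) k)
    rw [WithLp.equiv_apply, Matrix.ofLp_toEuclideanLin_apply] at h
    exact h
  · intro i j k
    have h0 : Matrix.toEuclideanLin (B i j)ᴴ (bas k)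
        = (starRingEnd ℂ) (β i j k) • bas k := by
      rw [← hadj (i, j)]
      exact hNadj (i, j) k
    have h := congrArg (WithLp.equiv 2 (Fin d → ℂ)) h0
    rw [WithLp.equiv_apply, Matrix.ofLp_toEuclideanLin_apply] at h
    exact h

end Stage3

section Main

set_option maxHeartbeats 1000000 in
/-- a positive semidefinite block matrix with normal, mutually
commuting blocks has a separable decomposition with at most `n·d` rank-one
product terms. -/
theorem separable_decomposition_of_normal_commuting {n d : ℕ}
    (B : Fin n → Fin n → Matrix (Fin d) (Fin d) ℂ)
    (hnormal : ∀ i j : Fin n, B i j * (B i j)ᴴ = (B i j)ᴴ * B i j)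
    (hcomm : ∀ i j i' j' : Fin n, B i j * B i' j' = B i' j' * B i j)
    (hT : (∑ i : Fin n, ∑ j : Fin n,
        (Matrix.single i j (1 : ℂ)) ⊗ₖ (B i j)).PosSemidef) :
    ∃ (lam : Fin d → Fin n → ℝ) (v : Fin d → Fin n → Fin n → ℂ)
      (u : Fin d → Fin d → ℂ),
      (∀ k j, 0 ≤ lam k j) ∧
      (∑ i : Fin n, ∑ j : Fin n, (Matrix.single i j (1 : ℂ)) ⊗ₖ (B i j))
        = ∑ k : Fin d, ∑ j : Fin n,
            (lam k j : ℂ) •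
              (Matrix.vecMulVec (v k j) (star (v k j)) ⊗ₖ
                Matrix.vecMulVec (u k) (star (u k))) := by
  classical
  obtain ⟨u, β, hdot, hspan, heig, headj⟩ :=
    exists_eigenbasis B (fun i j => hnormal i j) (fun i j i' j' => hcomm i j i' j')
  set T : Matrix (Fin n × Fin d) (Fin n × Fin d) ℂ :=
    ∑ i : Fin n, ∑ j : Fin n, (Matrix.single i j (1 : ℂ)) ⊗ₖ (B i j) with hTdef
  have hTapp : ∀ a c (b e : Fin d), T (a, b) (c, e) = B a c b e := by
    intro a c b e
    rw [hTdef]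
    simp only [Matrix.sum_apply, Matrix.kroneckerMap_apply, Matrix.single,
      Matrix.of_apply, ite_mul, one_mul, zero_mul]
    simp [ite_and, Finset.sum_ite_eq, Finset.sum_ite_eq']
  -- the rank-one projections onto the eigenvectors
  set W : Fin d → Matrix (Fin d) (Fin d) ℂ := fun k => vecMulVec (u k) (star (u k)) with hWdef
  have hWapp : ∀ k a b, W k a b = u k a * (starRingEnd ℂ) (u k b) := by
    intro k a b
    simp [hWdef, vecMulVec_apply, Pi.star_apply, Complex.star_def]
  have hWmul : ∀ k (x : Fin d → ℂ), W k *ᵥ x = (star (u k) ⬝ᵥ x) • u k := by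
    intro k x
    funext i
    simp only [hWdef, Matrix.mulVec, dotProduct, vecMulVec_apply, Pi.smul_apply,
      smul_eq_mul]
    rw [Finset.sum_mul]
    exact Finset.sum_congr rfl fun j _ => by ring
  have hne : ∀ k, u k ≠ 0 := by
    intro k hk
    have := hdot k k
    rw [hk] at this
    simp at this
  -- B as a combination of the rank-one projections
  have hB : ∀ i j, B i j = ∑ k, β i j k • W k := by
    intro i j
    have key : ∀ x : Fin d → ℂ, B i j *ᵥ x = (∑ k, β i j k • W k) *ᵥ x := by
      intro x
      obtain ⟨c, hc⟩ := hspan x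
      rw [hc]
      rw [show ∀ (M : Matrix (Fin d) (Fin d) ℂ), M *ᵥ (∑ k, c k • u k)
          = ∑ k, c k • (M *ᵥ u k) from fun M => by
        simp only [← Matrix.mulVecLin_apply, _root_.map_sum, _root_.map_smul],
        show ∀ (M : Matrix (Fin d) (Fin d) ℂ), M *ᵥ (∑ k, c k • u k)
          = ∑ k, c k • (M *ᵥ u k) from fun M => by
        simp only [← Matrix.mulVecLin_apply, _root_.map_sum, _root_.map_smul]]
      refine Finset.sum_congr rfl fun m _ => ?_
      rw [heig i j m]
      congr 1
      rw [show (∑ k, β i j k • W k) *ᵥ u m = ∑ k, (β i j k • W k) *ᵥ u m from by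
        funext i'
        simp only [Matrix.mulVec, dotProduct, Matrix.sum_apply, Finset.sum_apply,
          Finset.sum_mul]
        rw [Finset.sum_comm]]
      rw [Finset.sum_eq_single m]
      · rw [Matrix.smul_mulVec, hWmul, hdot]
        simp
      · intro k _ hk
        rw [Matrix.smul_mulVec, hWmul, hdot]
        simp [hk]
      · simp
    ext a b
    have h := congrFun (key (Pi.single b 1)) a
    rw [Matrix.mulVec_single, Matrix.mulVec_single] at h
    simpa using h
  have hBapp : ∀ i j a b, B i j a b = ∑ k, β i j k * W k a b := by
    intro i j a b
    rw [hB i j]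
    simp [Matrix.sum_apply]
  -- the scalar matrices
  set Cm : Fin d → Matrix (Fin n) (Fin n) ℂ := fun k => Matrix.of fun i j => β i j k with hCm
  have hTapp2 : ∀ a c (b e : Fin d), T (a, b) (c, e) = ∑ m, Cm m a c * W m b e := by
    intro a c b e
    rw [hTapp, hBapp]
    simp [hCm]
  -- Hermitian property of the scalar matrices
  have hsymB : ∀ i j, (B i j)ᴴ = B j i := by
    intro i j
    ext a b
    rw [Matrix.conjTranspose_apply]
    have h2 := congrFun (congrFun hT.1 (j, a)) (i, b)
    rw [Matrix.conjTranspose_apply, hTapp, hTapp] at h2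
    exact h2
  have hermβ : ∀ i j k, (starRingEnd ℂ) (β i j k) = β j i k := by
    intro i j k
    have h1 := headj i j k
    rw [hsymB, heig j i k] at h1
    have h2 : (β j i k - (starRingEnd ℂ) (β i j k)) • u k = 0 := by
      rw [sub_smul, h1, sub_self]
    rcases smul_eq_zero.mp h2 with h | h
    · exact (sub_eq_zero.mp h).symm
    · exact absurd h (hne k)
  -- positive semidefiniteness of the scalar matrices
  have hCpsd : ∀ k, (Cm k).PosSemidef := by
    intro k
    refine Matrix.posSemidef_iff_dotProduct_mulVec.mpr ⟨?_, ?_⟩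
    · ext i j
      rw [Matrix.conjTranspose_apply]
      show (starRingEnd ℂ) (Cm k j i) = Cm k i j
      simp only [hCm, Matrix.of_apply]
      exact hermβ j i k
    · intro x
      set z : Fin n × Fin d → ℂ := fun p => x p.1 * u k p.2 with hz
      have hq := hT.dotProduct_mulVec_nonneg z
      have hTz : ∀ a b, (T *ᵥ z) (a, b) = ∑ m, (Cm m *ᵥ x) a * ((W m *ᵥ u k) b) := by
        intro a b
        have h0 : (T *ᵥ z) (a, b) = ∑ c, ∑ e, T (a, b) (c, e) * z (c, e) := by
          simp [Matrix.mulVec, dotProduct, Fintype.sum_prod_type]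
        rw [h0]
        simp only [hTapp2, hz]
        calc ∑ c, ∑ e, (∑ m, Cm m a c * W m b e) * (x c * u k e)
            = ∑ c, ∑ e, ∑ m, (Cm m a c * x c) * (W m b e * u k e) := by
              refine Finset.sum_congr rfl fun c _ => Finset.sum_congr rfl fun e _ => ?_
              rw [Finset.sum_mul]
              exact Finset.sum_congr rfl fun m _ => by ring
          _ = ∑ m, ∑ c, ∑ e, (Cm m a c * x c) * (W m b e * u k e) := by
              rw [show (∑ c, ∑ e, ∑ m, (Cm m a c * x c) * (W m b e * u k e))
                  = ∑ c, ∑ m, ∑ e, (Cm m a c * x c) * (W m b e * u k e) from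
                Finset.sum_congr rfl fun c _ => Finset.sum_comm, Finset.sum_comm]
          _ = ∑ m, (Cm m *ᵥ x) a * ((W m *ᵥ u k) b) := by
              refine Finset.sum_congr rfl fun m _ => ?_
              simp only [Matrix.mulVec, dotProduct]
              rw [Finset.sum_mul_sum]
      have hfact : star z ⬝ᵥ (T *ᵥ z) = star x ⬝ᵥ (Cm k *ᵥ x) := by
        have h1 : star z ⬝ᵥ (T *ᵥ z)
            = ∑ a, ∑ b, (starRingEnd ℂ) (x a * u k b) * (T *ᵥ z) (a, b) := by
          simp [dotProduct, Fintype.sum_prod_type, hz, Pi.star_apply, Complex.star_def]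
        rw [h1]
        have h2 : ∀ a (b : Fin d), (starRingEnd ℂ) (x a * u k b) * (T *ᵥ z) (a, b)
            = ∑ m, ((starRingEnd ℂ) (x a) * (Cm m *ᵥ x) a)
              * ((starRingEnd ℂ) (u k b) * ((W m *ᵥ u k) b)) := by
          intro a b
          rw [hTz, Finset.mul_sum]
          exact Finset.sum_congr rfl fun m _ => by rw [_root_.map_mul]; ring
        simp only [h2]
        rw [show (∑ a, ∑ b, ∑ m, ((starRingEnd ℂ) (x a) * (Cm m *ᵥ x) a)
              * ((starRingEnd ℂ) (u k b) * ((W m *ᵥ u k) b)))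
            = ∑ a, ∑ m, ∑ b, ((starRingEnd ℂ) (x a) * (Cm m *ᵥ x) a)
              * ((starRingEnd ℂ) (u k b) * ((W m *ᵥ u k) b)) from
          Finset.sum_congr rfl fun a _ => Finset.sum_comm, Finset.sum_comm]
        have h3 : ∀ m, ∑ a, ∑ b, ((starRingEnd ℂ) (x a) * (Cm m *ᵥ x) a)
              * ((starRingEnd ℂ) (u k b) * ((W m *ᵥ u k) b))
            = (star x ⬝ᵥ (Cm m *ᵥ x)) * (star (u k) ⬝ᵥ (W m *ᵥ u k)) := by
          intro m
          rw [show (star x ⬝ᵥ (Cm m *ᵥ x)) = ∑ a, (starRingEnd ℂ) (x a) * (Cm m *ᵥ x) a by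
              simp [dotProduct, Pi.star_apply, Complex.star_def],
            show (star (u k) ⬝ᵥ (W m *ᵥ u k)) = ∑ b, (starRingEnd ℂ) (u k b) * ((W m *ᵥ u k) b) by
              simp [dotProduct, Pi.star_apply, Complex.star_def],
            Finset.sum_mul_sum]
        simp only [h3]
        have h4 : ∀ m, star (u k) ⬝ᵥ (W m *ᵥ u k) = if m = k then 1 else 0 := by
          intro m
          rw [hWmul, dotProduct_smul, hdot k m, hdot m k, smul_eq_mul]
          by_cases h : m = k
          · subst h; simp
          · simp [h, fun hh : k = m => h hh.symm]
        simp only [h4]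
        simp [mul_ite, mul_one, mul_zero, Finset.sum_ite_eq']
      rwa [hfact] at hq
  -- spectral decomposition of each scalar matrix
  set lam : Fin d → Fin n → ℝ := fun k => (hCpsd k).1.eigenvalues with hlam
  set v : Fin d → Fin n → Fin n → ℂ :=
    fun k j => fun a => ((hCpsd k).1.eigenvectorUnitary : Matrix (Fin n) (Fin n) ℂ) a j with hv
  have hCdecomp : ∀ k a c, Cm k a c
      = ∑ j, (lam k j : ℂ) * (v k j a * (starRingEnd ℂ) (v k j c)) := by
    intro k a c
    conv_lhs => rw [(hCpsd k).1.spectral_theorem, Unitary.conjStarAlgAut_apply]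
    rw [Matrix.mul_apply]
    refine Finset.sum_congr rfl fun j _ => ?_
    rw [Matrix.mul_diagonal]
    simp only [hv, hlam, Matrix.star_apply, Complex.star_def, Function.comp_apply,
      show (RCLike.ofReal : ℝ → ℂ) = Complex.ofReal from rfl]
    ring
  refine ⟨lam, v, u, fun k j => (hCpsd k).eigenvalues_nonneg j, ?_⟩
  show T = _
  ext p q
  obtain ⟨a, b⟩ := p
  obtain ⟨c, e⟩ := q
  rw [hTapp2]
  simp only [Matrix.sum_apply, Matrix.smul_apply, Matrix.kroneckerMap_apply,
    vecMulVec_apply, Pi.star_apply, Complex.star_def, smul_eq_mul]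
  refine Finset.sum_congr rfl fun k _ => ?_
  rw [hCdecomp, Finset.sum_mul]
  refine Finset.sum_congr rfl fun j _ => ?_
  rw [hWapp]
  ring

end Main
end

section
/- Let B ∈ M(d,ℂ) be a normal matrix and let P_{ij} ∈ ℂ[x] for i,j = 1,…,n be arbitrary polynomials. Then the block matrix T = ∑_{i,j=1}^n E_{ij} ⊗ P_{ij}(B) ∈ M(nd,ℂ) is separable if and only if it is positive semidefinite. -/
open Matrix Kronecker Polynomial
open scoped ComplexOrder

lemma kron_conjTranspose {l m p q : Type*} (A : Matrix l m ℂ) (B : Matrix p q ℂ) :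
    (A ⊗ₖ B)ᴴ = Aᴴ ⊗ₖ Bᴴ := by
  ext ⟨i, a⟩ ⟨j, b⟩
  simp [conjTranspose_apply, kroneckerMap_apply, star_mul']

lemma posSemidef_kron {m p : Type*} [Fintype m] [Fintype p] [DecidableEq m] [DecidableEq p]
    {A : Matrix m m ℂ} {B : Matrix p p ℂ} (hA : A.PosSemidef) (hB : B.PosSemidef) :
    (A ⊗ₖ B).PosSemidef := by
  exact hA.kronecker hB

lemma pow_mulVec {d : ℕ} {B : Matrix (Fin d) (Fin d) ℂ} {v : Fin d → ℂ} {μ : ℂ}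
    (hv : B *ᵥ v = μ • v) (k : ℕ) : (B ^ k) *ᵥ v = (μ ^ k) • v := by
  induction k with
  | zero => simp
  | succ k ih =>
      rw [pow_succ, ← mulVec_mulVec, hv, mulVec_smul, ih, smul_smul, pow_succ, mul_comm]

lemma aeval_mulVec {d : ℕ} {B : Matrix (Fin d) (Fin d) ℂ} {v : Fin d → ℂ} {μ : ℂ}
    (hv : B *ᵥ v = μ • v) (q : Polynomial ℂ) :
    (aeval B q) *ᵥ v = (aeval μ q) • v := by
  induction q using Polynomial.induction_on' with
  | add p q hp hq => simp [add_mulVec, hp, hq, add_smul]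
  | monomial k c =>
      simp only [aeval_monomial, ← mulVec_mulVec, pow_mulVec hv k, mulVec_smul,
        Algebra.algebraMap_self, RingHom.id_apply, smul_smul]
      rw [Algebra.algebraMap_eq_smul_one, smul_mulVec, one_mulVec, smul_smul, mul_comm]


open Module.End in
set_option maxHeartbeats 1000000 in
lemma normal_exists_eigenbasis {d : ℕ} (B : Matrix (Fin d) (Fin d) ℂ)
    (hnormal : B * Bᴴ = Bᴴ * B) :
    ∃ (v : Fin d → (Fin d → ℂ)) (μ : Fin d → ℂ),
      (∀ k, B *ᵥ v k = μ k • v k) ∧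
      (∑ k, vecMulVec (v k) (star (v k)) = (1 : Matrix (Fin d) (Fin d) ℂ)) ∧
      (∀ k, star (v k) ⬝ᵥ v k = 1) := by
  classical
  set H : Matrix (Fin d) (Fin d) ℂ := (2⁻¹ : ℂ) • (B + Bᴴ) with hHdef
  set K : Matrix (Fin d) (Fin d) ℂ := (Complex.I * 2⁻¹) • (Bᴴ - B) with hKdef
  have hH : H.IsHermitian := by
    rw [IsHermitian, hHdef, conjTranspose_smul, conjTranspose_add, conjTranspose_conjTranspose]
    rw [add_comm]
    norm_num
  have hK : K.IsHermitian := by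
    rw [IsHermitian, hKdef, conjTranspose_smul, conjTranspose_sub, conjTranspose_conjTranspose]
    rw [show star (Complex.I * 2⁻¹) = -(Complex.I * 2⁻¹) by
        simp [Complex.ext_iff], neg_smul, ← smul_neg, neg_sub]
  have hBHK : B = H + Complex.I • K := by
    rw [hHdef, hKdef, smul_smul]
    have : Complex.I * (Complex.I * 2⁻¹) = -2⁻¹ := by
      rw [← mul_assoc, Complex.I_mul_I]; ring
    rw [this]
    module
  have hHK : H * K = K * H := by
    rw [hHdef, hKdef]
    simp only [Matrix.smul_mul, Matrix.mul_smul, smul_smul]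
    rw [mul_comm ((2:ℂ)⁻¹) (Complex.I * 2⁻¹)]
    congr 1
    simp only [mul_add, add_mul, mul_sub, sub_mul, hnormal]
    abel
  -- pass to linear maps
  have hmul : ∀ M N : Matrix (Fin d) (Fin d) ℂ,
      Matrix.toEuclideanLin (M * N) = Matrix.toEuclideanLin M * Matrix.toEuclideanLin N := by
    intro M N
    refine LinearMap.ext fun x => ?_
    simp [Matrix.toEuclideanLin_apply, Module.End.mul_apply, ← mulVec_mulVec]
  have hHs : (Matrix.toEuclideanLin H).IsSymmetric := isHermitian_iff_isSymmetric.mp hH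
  have hKs : (Matrix.toEuclideanLin K).IsSymmetric := isHermitian_iff_isSymmetric.mp hK
  have hcomm : Commute (Matrix.toEuclideanLin H) (Matrix.toEuclideanLin K) := by
    rw [Commute, SemiconjBy, ← hmul, ← hmul, hHK]
  set V : ℂ × ℂ → Submodule ℂ (EuclideanSpace ℂ (Fin d)) := fun p =>
    eigenspace (Matrix.toEuclideanLin H) p.2 ⊓ eigenspace (Matrix.toEuclideanLin K) p.1
    with hVdef
  have hOrth := LinearMap.IsSymmetric.orthogonalFamily_eigenspace_inf_eigenspace hHs hKs
  have hsup : ⨆ p : ℂ × ℂ, V p = ⊤ := by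
    rw [iSup_prod, iSup_comm]
    exact LinearMap.IsSymmetric.iSup_iSup_eigenspace_inf_eigenspace_eq_top_of_commute
      hHs hKs hcomm
  have hFin : {p : ℂ × ℂ | V p ≠ ⊥}.Finite :=
    Submodule.finite_ne_bot_of_iSupIndep hOrth.independent
  haveI : Fintype {p : ℂ × ℂ // V p ≠ ⊥} := hFin.fintype
  have hOrth' := hOrth.comp (Subtype.coe_injective (p := fun p : ℂ × ℂ => V p ≠ ⊥))
  have hint : DirectSum.IsInternal (fun s : {p : ℂ × ℂ // V p ≠ ⊥} => V s.1) := by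
    rw [hOrth'.isInternal_iff]
    rw [iSup_ne_bot_subtype, hsup, Submodule.top_orthogonal_eq_bot]
  have hd : Module.finrank ℂ (EuclideanSpace ℂ (Fin d)) = d := by
    simp [finrank_euclideanSpace]
  set b := hint.subordinateOrthonormalBasis hd hOrth' with hbdef
  set pk : Fin d → {p : ℂ × ℂ // V p ≠ ⊥} := fun k =>
    hint.subordinateOrthonormalBasisIndex hd k hOrth' with hpkdef
  have hmem : ∀ k, b k ∈ V (pk k).1 := fun k =>
    hint.subordinateOrthonormalBasis_subordinate hd k hOrth'
  set v : Fin d → (Fin d → ℂ) := fun k => WithLp.equiv 2 (Fin d → ℂ) (b k) with hvdef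
  set μ : Fin d → ℂ := fun k => (pk k).1.2 + Complex.I * (pk k).1.1 with hμdef
  have horth : ∀ k l, star (v k) ⬝ᵥ v l = if k = l then (1:ℂ) else 0 := by
    intro k l
    have := orthonormal_iff_ite.mp b.orthonormal k l
    rw [EuclideanSpace.inner_eq_star_dotProduct, dotProduct_comm] at this
    exact this
  have hsum1 : ∑ k, vecMulVec (v k) (star (v k)) = (1 : Matrix (Fin d) (Fin d) ℂ) := by
    set W : Matrix (Fin d) (Fin d) ℂ := Matrix.of (fun a k => v k a) with hWdef
    have hWW : star W * W = 1 := by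
      ext k l
      have := horth k l
      simp only [Matrix.mul_apply, Matrix.star_apply, hWdef, Matrix.of_apply]
      simpa [dotProduct, Pi.star_apply, Matrix.one_apply] using this
    have hWW' : W * star W = 1 := mul_eq_one_comm.mp hWW
    ext a c
    rw [Matrix.sum_apply]
    have h := congrFun (congrFun hWW' a) c
    rw [Matrix.mul_apply] at h
    rw [← h]
    apply Finset.sum_congr rfl
    intro k _
    simp [vecMulVec_apply, Matrix.star_apply, hWdef]
  refine ⟨v, μ, ?_, hsum1, ?_⟩
  · intro k
    have h1 : Matrix.toEuclideanLin H (b k) = (pk k).1.2 • b k :=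
      mem_eigenspace_iff.mp (hmem k).1
    have h2 : Matrix.toEuclideanLin K (b k) = (pk k).1.1 • b k :=
      mem_eigenspace_iff.mp (hmem k).2
    have h3 : Matrix.toEuclideanLin B (b k) = μ k • b k := by
      rw [hBHK, map_add,
        show Matrix.toEuclideanLin (Complex.I • K) = Complex.I • Matrix.toEuclideanLin K from
          _root_.map_smul _ _ _,
        LinearMap.add_apply, LinearMap.smul_apply, h1, h2, smul_smul, ← add_smul]
    rw [Matrix.toEuclideanLin_apply] at h3
    have h4 := congrArg (WithLp.equiv 2 (Fin d → ℂ)) h3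
    simp at h4
    exact h4
  · intro k
    rw [horth k k]
    simp


lemma blockT_apply {n d : ℕ} (M : Fin n → Fin n → Matrix (Fin d) (Fin d) ℂ)
    (i : Fin n) (a : Fin d) (j : Fin n) (b : Fin d) :
    (∑ i' : Fin n, ∑ j' : Fin n, (Matrix.single i' j' (1 : ℂ)) ⊗ₖ M i' j')
      (i, a) (j, b) = M i j a b := by
  simp only [Matrix.sum_apply, kroneckerMap_apply, Matrix.single]
  rw [Finset.sum_eq_single i]
  · rw [Finset.sum_eq_single j] <;> simp +contextual [Matrix.of_apply]
  · intro i' _ hi'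
    apply Finset.sum_eq_zero
    intro j' _
    simp only [Matrix.of_apply]
    rw [if_neg (by exact fun h => hi' h.1), zero_mul]
  · simp


lemma conj_dot {d : ℕ} (N : Matrix (Fin d) (Fin d) ℂ) (u : Fin d → ℂ) :
    star (star u ⬝ᵥ (N *ᵥ u)) = star u ⬝ᵥ (Nᴴ *ᵥ u) := by
  rw [← Matrix.star_dotProduct, star_mulVec, ← Matrix.dotProduct_mulVec]

lemma vecMulVec_posSemidef {d : ℕ} (u : Fin d → ℂ) :
    (vecMulVec u (star u)).PosSemidef := by
  rw [posSemidef_iff_dotProduct_mulVec]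
  constructor
  · ext a c
    simp [conjTranspose_apply, vecMulVec_apply, mul_comm]
  · intro x
    have h : (vecMulVec u (star u)) *ᵥ x = (star u ⬝ᵥ x) • u := by
      ext a
      simp [vecMulVec_apply, mulVec, dotProduct, Finset.mul_sum, mul_comm, mul_left_comm,
        mul_assoc]
    rw [h, dotProduct_smul]
    have h2 : star x ⬝ᵥ u = star (star u ⬝ᵥ x) := by
      rw [Matrix.star_dotProduct]
    rw [smul_eq_mul, h2, mul_comm]
    exact star_mul_self_nonneg _


/-- for a normal matrix `B` and polynomials `P_{ij}`, the block
matrix with blocks `P_{ij}(B)` is separable iff it is positive semidefinite. -/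
theorem separable_iff_posSemidef_polynomial_blocks {n d : ℕ}
    (B : Matrix (Fin d) (Fin d) ℂ)
    (hnormal : B * Bᴴ = Bᴴ * B)
    (P : Fin n → Fin n → Polynomial ℂ) :
    MatSeparable (∑ i : Fin n, ∑ j : Fin n,
        (Matrix.single i j (1 : ℂ)) ⊗ₖ (Polynomial.aeval B (P i j)))
      ↔ (∑ i : Fin n, ∑ j : Fin n,
          (Matrix.single i j (1 : ℂ)) ⊗ₖ
            (Polynomial.aeval B (P i j))).PosSemidef := by
  classical
  set M : Fin n → Fin n → Matrix (Fin d) (Fin d) ℂ := fun i j => aeval B (P i j) with hMdef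
  set T : Matrix (Fin n × Fin d) (Fin n × Fin d) ℂ :=
    ∑ i : Fin n, ∑ j : Fin n, (Matrix.single i j (1 : ℂ)) ⊗ₖ M i j with hTdef
  have hTapp : ∀ i a j b, T (i, a) (j, b) = M i j a b := fun i a j b => blockT_apply M i a j b
  constructor
  · rintro ⟨s, Ps, Qs, hPs, hQs, hsum⟩
    rw [hsum]
    exact Finset.sum_induction _ Matrix.PosSemidef (fun a b ha hb => ha.add hb)
      Matrix.PosSemidef.zero (fun i _ => posSemidef_kron (hPs i) (hQs i))
  · intro hT
    obtain ⟨v, μ, hv, hsum, hnorm⟩ := normal_exists_eigenbasis B hnormal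
    have hMv : ∀ i j k, M i j *ᵥ v k = (aeval (μ k) (P i j)) • v k :=
      fun i j k => aeval_mulVec (hv k) (P i j)
    have hblock : ∀ i j, (M j i)ᴴ = M i j := by
      intro i j
      ext a b
      have h1 := congrFun (congrFun hT.1 (i, a)) (j, b)
      rw [conjTranspose_apply, hTapp, hTapp] at h1
      rw [conjTranspose_apply]
      exact h1
    have hkey : ∀ k i j, aeval (μ k) (P i j) = star (v k) ⬝ᵥ (M i j *ᵥ v k) := by
      intro k i j
      rw [hMv, dotProduct_smul, hnorm k, smul_eq_mul, mul_one]
    set A : Fin d → Matrix (Fin n) (Fin n) ℂ :=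
      fun k => Matrix.of fun i j => aeval (μ k) (P i j) with hAdef
    have hAapp : ∀ k i j, A k i j = star (v k) ⬝ᵥ (M i j *ᵥ v k) := fun k i j => hkey k i j
    have hAherm : ∀ k, (A k).IsHermitian := by
      intro k
      ext i j
      rw [conjTranspose_apply, hAapp, hAapp, conj_dot, hblock]
    have hAquad : ∀ (k) (x : Fin n → ℂ),
        star x ⬝ᵥ (A k *ᵥ x) =
          star (fun q : Fin n × Fin d => x q.1 * v k q.2) ⬝ᵥ
            (T *ᵥ fun q : Fin n × Fin d => x q.1 * v k q.2) := by
      intro k x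
      simp only [dotProduct, mulVec, Fintype.sum_prod_type, Pi.star_apply, hTapp, hAapp,
        star_mul']
      simp only [Finset.mul_sum, Finset.sum_mul]
      apply Finset.sum_congr rfl
      intro i _
      rw [Finset.sum_comm]
      apply Finset.sum_congr rfl
      intro j _
      apply Finset.sum_congr rfl
      intro a _
      apply Finset.sum_congr rfl
      intro b _
      ring
    have hApsd : ∀ k, (A k).PosSemidef :=
      fun k => posSemidef_iff_dotProduct_mulVec.mpr
        ⟨hAherm k, fun x => by rw [hAquad]; exact (posSemidef_iff_dotProduct_mulVec.mp hT).2 _⟩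
    have hone : ∀ c b, (∑ k, v k c * star (v k b)) = (1 : Matrix (Fin d) (Fin d) ℂ) c b := by
      intro c b
      have h := congrFun (congrFun hsum c) b
      simpa [Matrix.sum_apply, vecMulVec_apply] using h
    refine ⟨d, A, fun k => vecMulVec (v k) (star (v k)), hApsd,
      fun k => vecMulVec_posSemidef (v k), ?_⟩
    ext ⟨i, a⟩ ⟨j, b⟩
    rw [hTapp, Matrix.sum_apply]
    simp only [kroneckerMap_apply, vecMulVec_apply, Pi.star_apply, hAapp]
    calc M i j a b = ∑ c, M i j a c * (1 : Matrix (Fin d) (Fin d) ℂ) c b := by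
          simp [Matrix.one_apply, mul_ite, mul_one, mul_zero]
      _ = ∑ c, M i j a c * ∑ k, v k c * star (v k b) := by
          apply Finset.sum_congr rfl
          intro c _
          rw [hone]
      _ = ∑ k, (star (v k) ⬝ᵥ (M i j *ᵥ v k)) * (v k a * star (v k b)) := by
          simp only [Finset.mul_sum]
          rw [Finset.sum_comm]
          apply Finset.sum_congr rfl
          intro k _
          have h1 : ∑ c, M i j a c * v k c = aeval (μ k) (P i j) * v k a := by
            have h2 := congrFun (hMv i j k) a
            simpa [mulVec, dotProduct] using h2
          calc ∑ c, M i j a c * (v k c * star (v k b))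
              = (∑ c, M i j a c * v k c) * star (v k b) := by
                rw [Finset.sum_mul]
                apply Finset.sum_congr rfl
                intro c _
                ring
            _ = (star (v k) ⬝ᵥ (M i j *ᵥ v k)) * (v k a * star (v k b)) := by
                rw [h1, ← hkey]
                ring
end

section
/- For β ∈ ℂ with |β| ≤ 1 and n ≥ 1, the Toeplitz matrix M(β) ∈ M(n,ℂ) with entries M(β)_{ij} = β^{j−i} for j ≥ i and M(β)_{ij} = (conj β)^{i−j} for i > j (indices i,j = 0,…,n−1) is positive semidefinite. -/
open Matrix
open scoped ComplexOrder

private lemma toeplitz_key (γ : ℂ) (i : ℕ) :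
    ∑ k ∈ Finset.range (i + 1), (if k = 0 then 1 else 1 - γ) * γ ^ (i - k) = 1 := by
  induction i with
  | zero => simp
  | succ i ih =>
    rw [Finset.sum_range_succ]
    have h1 : ∑ k ∈ Finset.range (i + 1), (if k = 0 then 1 else 1 - γ) * γ ^ (i + 1 - k)
        = γ * ∑ k ∈ Finset.range (i + 1), (if k = 0 then 1 else 1 - γ) * γ ^ (i - k) := by
      rw [Finset.mul_sum]
      refine Finset.sum_congr rfl fun k hk => ?_
      have hk' : k ≤ i := Nat.lt_succ_iff.mp (Finset.mem_range.mp hk)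
      have h2 : i + 1 - k = (i - k) + 1 := by omega
      rw [h2, pow_succ]; ring
    rw [h1, ih]
    simp

private lemma toeplitz_sum_fin {n : ℕ} (f : ℕ → ℂ) (i : ℕ) (hi : i < n) :
    ∑ k : Fin n, (if (k : ℕ) ≤ i then f k else 0) = ∑ k ∈ Finset.range (i + 1), f k := by
  rw [Fin.sum_univ_eq_sum_range (fun k => if k ≤ i then f k else 0) n]
  have : ∀ k ∈ Finset.range n, (if k ≤ i then f k else 0)
      = if k ∈ Finset.range (i + 1) then f k else 0 := by
    intro k _; simp [Finset.mem_range, Nat.lt_succ_iff]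
  rw [Finset.sum_congr rfl this, Finset.sum_ite_mem,
    Finset.inter_eq_right.mpr (Finset.range_subset_range.mpr hi)]

/-- for `|β| ≤ 1` the Toeplitz matrix `M(β)` with entries
`β^{j-i}` above the diagonal and `(conj β)^{i-j}` below is positive
semidefinite. -/
theorem posSemidef_toeplitz_power_matrix {n : ℕ} (hn : 1 ≤ n) (β : ℂ)
    (hβ : ‖β‖ ≤ 1) :
    (Matrix.of fun i j : Fin n =>
        if (i : ℕ) ≤ (j : ℕ) then β ^ ((j : ℕ) - (i : ℕ))
        else (starRingEnd ℂ β) ^ ((i : ℕ) - (j : ℕ))).PosSemidef := by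
  set γ : ℂ := (starRingEnd ℂ β) * β with hγdef
  have hγ : γ = ((‖β‖ ^ 2 : ℝ) : ℂ) := by
    rw [hγdef, mul_comm, Complex.mul_conj, Complex.normSq_eq_norm_sq]
  set c : Fin n → ℂ := fun k => if (k : ℕ) = 0 then 1 else 1 - γ with hc
  set B : Matrix (Fin n) (Fin n) ℂ :=
    Matrix.of fun k j : Fin n => if (k : ℕ) ≤ (j : ℕ) then β ^ ((j : ℕ) - (k : ℕ)) else 0 with hB
  have hD : (Matrix.diagonal c).PosSemidef := by
    refine Matrix.posSemidef_diagonal_iff.mpr fun k => ?_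
    by_cases h : (k : ℕ) = 0
    · simp [hc, h]
    · have h1 : (0 : ℝ) ≤ 1 - ‖β‖ ^ 2 := by nlinarith [norm_nonneg β]
      have : c k = ((1 - ‖β‖ ^ 2 : ℝ) : ℂ) := by
        simp [hc, h, hγ]
      rw [this]
      exact Complex.zero_le_real.mpr h1
  have key : Matrix.of (fun i j : Fin n =>
        if (i : ℕ) ≤ (j : ℕ) then β ^ ((j : ℕ) - (i : ℕ))
        else (starRingEnd ℂ β) ^ ((i : ℕ) - (j : ℕ))) = Bᴴ * Matrix.diagonal c * B := by
    ext i j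
    rw [Matrix.mul_assoc, Matrix.mul_apply]
    simp only [Matrix.conjTranspose_apply, Matrix.diagonal_mul, Matrix.of_apply, hB,
      Matrix.of_apply, RCLike.star_def]
    by_cases hij : (i : ℕ) ≤ (j : ℕ)
    · have step : ∀ k : Fin n,
          (starRingEnd ℂ) (if (k : ℕ) ≤ (i : ℕ) then β ^ ((i : ℕ) - (k : ℕ)) else 0) *
            (c k * (if (k : ℕ) ≤ (j : ℕ) then β ^ ((j : ℕ) - (k : ℕ)) else 0))
          = if (k : ℕ) ≤ (i : ℕ) then
              ((if (k : ℕ) = 0 then 1 else 1 - γ) * γ ^ ((i : ℕ) - (k : ℕ)))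
                * β ^ ((j : ℕ) - (i : ℕ)) else 0 := by
        intro k
        by_cases hk : (k : ℕ) ≤ (i : ℕ)
        · have hkj : (k : ℕ) ≤ (j : ℕ) := le_trans hk hij
          simp only [hk, hkj, if_true]
          rw [map_pow]
          have hsplit : (j : ℕ) - (k : ℕ) = ((i : ℕ) - (k : ℕ)) + ((j : ℕ) - (i : ℕ)) := by
            omega
          rw [hsplit, pow_add, hc]
          simp only [hγdef, mul_pow]
          ring
        · simp [hk]
      rw [Finset.sum_congr rfl fun k _ => step k]
      rw [toeplitz_sum_fin (fun k => ((if k = 0 then 1 else 1 - γ) * γ ^ ((i : ℕ) - k))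
        * β ^ ((j : ℕ) - (i : ℕ))) (i : ℕ) i.isLt, ← Finset.sum_mul, toeplitz_key, one_mul]
      simp [hij]
    · have hji : (j : ℕ) ≤ (i : ℕ) := le_of_not_ge hij
      have step : ∀ k : Fin n,
          (starRingEnd ℂ) (if (k : ℕ) ≤ (i : ℕ) then β ^ ((i : ℕ) - (k : ℕ)) else 0) *
            (c k * (if (k : ℕ) ≤ (j : ℕ) then β ^ ((j : ℕ) - (k : ℕ)) else 0))
          = if (k : ℕ) ≤ (j : ℕ) then
              ((if (k : ℕ) = 0 then 1 else 1 - γ) * γ ^ ((j : ℕ) - (k : ℕ)))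
                * (starRingEnd ℂ β) ^ ((i : ℕ) - (j : ℕ)) else 0 := by
        intro k
        by_cases hk : (k : ℕ) ≤ (j : ℕ)
        · have hki : (k : ℕ) ≤ (i : ℕ) := le_trans hk hji
          simp only [hk, hki, if_true]
          rw [map_pow]
          have hsplit : (i : ℕ) - (k : ℕ) = ((j : ℕ) - (k : ℕ)) + ((i : ℕ) - (j : ℕ)) := by
            omega
          rw [hsplit, pow_add, hc]
          simp only [hγdef, mul_pow]
          ring
        · have hki : ¬ (k : ℕ) ≤ (i : ℕ) ∨ True := Or.inr trivial
          by_cases hki' : (k : ℕ) ≤ (i : ℕ)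
          · simp [hk, hki']
          · simp [hk, hki']
      rw [Finset.sum_congr rfl fun k _ => step k]
      rw [toeplitz_sum_fin (fun k => ((if k = 0 then 1 else 1 - γ) * γ ^ ((j : ℕ) - k))
        * (starRingEnd ℂ β) ^ ((i : ℕ) - (j : ℕ))) (j : ℕ) j.isLt, ← Finset.sum_mul,
        toeplitz_key, one_mul]
      simp [hij]
  rw [key]
  exact hD.conjTranspose_mul_mul_same B
end
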